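/- Let n₁, n₂ be positive integers, α > 0, and X ∈ ℝ^{n₁×n₂} with ‖X‖_max ≤ α. Let (I, J) be a random index pair uniformly distributed on {1,…,n₁}×{1,…,n₂} and let τ be uniformly distributed on [−α, α], with (I, J) and τ independent. Then E[ | X_{I,J} − α·sgn(X_{I,J} − τ) | ] = α − ‖X‖_F² / (α n₁ n₂). -/

import Mathlib

open MeasureTheory ProbabilityTheory

/-- The sign function: `+1` if `t ≥ 0` and `-1` if `t < 0`. -/
noncomputable def sgn (t : ℝ) : ℝ := if 0 ≤ t then 1 else -1

/-- Frobenius norm of a real matrix. -/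
noncomputable def frobR {n₁ n₂ : ℕ} (A : Matrix (Fin n₁) (Fin n₂) ℝ) : ℝ :=
  Real.sqrt (∑ i, ∑ j, (A i j) ^ 2)

lemma sgn_meas : Measurable sgn := by
  unfold sgn
  exact Measurable.ite measurableSet_Ici measurable_const measurable_const

lemma sgn_abs_le (t : ℝ) : |sgn t| ≤ 1 := by
  unfold sgn; split <;> simp

lemma f_bound (x α t : ℝ) (hx : |x| ≤ α) : |x - α * sgn (x - t)| ≤ 2 * α := by
  have h1 : |x - α * sgn (x - t)| ≤ |x| + |α * sgn (x - t)| := abs_sub _ _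
  have h2 : |α * sgn (x - t)| ≤ |α| := by
    rw [abs_mul]
    nlinarith [sgn_abs_le (x - t), abs_nonneg α]
  have hα : 0 ≤ α := le_trans (abs_nonneg x) hx
  rw [abs_of_nonneg hα] at h2
  linarith

lemma inner_int (α x : ℝ) (hα : 0 < α) (hx : |x| ≤ α) :
    ∫ t, |x - α * sgn (x - t)|
      ∂(ENNReal.ofReal (1 / (2 * α)) • (volume.restrict (Set.Icc (-α) α)))
      = α - x ^ 2 / α := by
  obtain ⟨hx1, hx2⟩ := abs_le.mp hx
  rw [integral_smul_measure, ENNReal.toReal_ofReal (by positivity)]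
  rw [integral_Icc_eq_integral_Ioc]
  have hsplit : Set.Ioc (-α) α = Set.Ioc (-α) x ∪ Set.Ioc x α :=
    (Set.Ioc_union_Ioc_eq_Ioc hx1 hx2).symm
  have hdisj : Disjoint (Set.Ioc (-α) x) (Set.Ioc x α) := by
    rw [Set.disjoint_left]
    rintro t ⟨_, h1⟩ ⟨h2, _⟩; linarith
  have heq1 : Set.EqOn (fun t : ℝ => |x - α * sgn (x - t)|) (fun _ => α - x)
      (Set.Ioc (-α) x) := by
    rintro t ⟨_, ht⟩
    have : sgn (x - t) = 1 := if_pos (by linarith)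
    simp only [this, mul_one]
    rw [abs_of_nonpos (by linarith)]; ring
  have heq2 : Set.EqOn (fun t : ℝ => |x - α * sgn (x - t)|) (fun _ => x + α)
      (Set.Ioc x α) := by
    rintro t ⟨ht, _⟩
    have : sgn (x - t) = -1 := if_neg (by simp; linarith)
    simp only [this, mul_neg_one, sub_neg_eq_add]
    rw [abs_of_nonneg (by linarith)]
  have hint1 : IntegrableOn (fun t : ℝ => |x - α * sgn (x - t)|) (Set.Ioc (-α) x) volume :=
    (integrableOn_const measure_Ioc_lt_top.ne).congr_fun heq1.symm measurableSet_Ioc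
  have hint2 : IntegrableOn (fun t : ℝ => |x - α * sgn (x - t)|) (Set.Ioc x α) volume :=
    (integrableOn_const measure_Ioc_lt_top.ne).congr_fun heq2.symm measurableSet_Ioc
  rw [hsplit, setIntegral_union hdisj measurableSet_Ioc hint1 hint2,
    setIntegral_congr_fun measurableSet_Ioc heq1, setIntegral_congr_fun measurableSet_Ioc heq2,
    setIntegral_const, setIntegral_const, Real.volume_real_Ioc_of_le hx1,
    Real.volume_real_Ioc_of_le hx2]
  simp only [smul_eq_mul]
  field_simp
  ring

/-- Expected distortion of a dithered one-bit sample over both the random dither and the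
uniformly random sampled entry (equation (25) in the paper):
`E[|X_{I,J} - α·sgn(X_{I,J} - τ)|] = α - ‖X‖_F²/(α n₁ n₂)`. -/
theorem expected_distortion (n₁ n₂ : ℕ) (hn₁ : 0 < n₁) (hn₂ : 0 < n₂)
    (α : ℝ) (hα : 0 < α)
    (X : Matrix (Fin n₁) (Fin n₂) ℝ) (hX : ∀ i j, |X i j| ≤ α)
    {Ω : Type*} [MeasureSpace Ω] [IsProbabilityMeasure (ℙ : Measure Ω)]
    (IJ : Ω → Fin n₁ × Fin n₂) (τ : Ω → ℝ)
    (hIJmeas : Measurable IJ) (hτmeas : Measurable τ)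
    -- (I, J) is uniform on {1,…,n₁}×{1,…,n₂}
    (hIJunif : ∀ p, ℙ (IJ ⁻¹' {p}) = ((n₁ * n₂ : ENNReal))⁻¹)
    -- τ is uniform on [-α, α]
    (hτunif : Measure.map τ ℙ =
      ENNReal.ofReal (1 / (2 * α)) • (volume.restrict (Set.Icc (-α) α)))
    -- (I, J) and τ are independent
    (hindep : IndepFun IJ τ ℙ) :
    ∫ ω, |X (IJ ω).1 (IJ ω).2 - α * sgn (X (IJ ω).1 (IJ ω).2 - τ ω)| ∂ℙ
      = α - frobR X ^ 2 / (α * n₁ * n₂) := by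
  have hπ : Measurable (fun ω => (IJ ω, τ ω)) := hIJmeas.prodMk hτmeas
  have hmap : Measure.map (fun ω => (IJ ω, τ ω)) ℙ
      = (Measure.map IJ ℙ).prod (Measure.map τ ℙ) :=
    (indepFun_iff_map_prod_eq_prod_map_map hIJmeas.aemeasurable hτmeas.aemeasurable).mp hindep
  have hν₁ : IsProbabilityMeasure (Measure.map IJ ℙ) :=
    Measure.isProbabilityMeasure_map hIJmeas.aemeasurable
  have hν₂ : IsProbabilityMeasure (Measure.map τ ℙ) :=
    Measure.isProbabilityMeasure_map hτmeas.aemeasurable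
  set F : (Fin n₁ × Fin n₂) × ℝ → ℝ :=
    fun q => |X q.1.1 q.1.2 - α * sgn (X q.1.1 q.1.2 - q.2)| with hFdef
  have hg : Measurable (fun p : Fin n₁ × Fin n₂ => X p.1 p.2) := Measurable.of_discrete
  have hFmeas : Measurable F := by
    apply Measurable.abs
    apply Measurable.sub
    · exact hg.comp measurable_fst
    · exact ((sgn_meas.comp ((hg.comp measurable_fst).sub measurable_snd)).const_mul α)
  have hFint : Integrable F ((Measure.map IJ ℙ).prod (Measure.map τ ℙ)) := by
    refine Integrable.mono' (integrable_const (2 * α)) hFmeas.aestronglyMeasurable ?_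
    filter_upwards with q
    rw [Real.norm_eq_abs, abs_abs]
    exact f_bound _ _ _ (hX _ _)
  have step1 : ∫ ω, |X (IJ ω).1 (IJ ω).2 - α * sgn (X (IJ ω).1 (IJ ω).2 - τ ω)| ∂ℙ
      = ∫ q, F q ∂((Measure.map IJ ℙ).prod (Measure.map τ ℙ)) := by
    rw [← hmap, integral_map hπ.aemeasurable hFmeas.aestronglyMeasurable]
  rw [step1, integral_prod F hFint]
  have step2 : ∀ p : Fin n₁ × Fin n₂,
      ∫ t, F (p, t) ∂(Measure.map τ ℙ) = α - (X p.1 p.2) ^ 2 / α := by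
    intro p
    rw [hτunif]
    exact inner_int α (X p.1 p.2) hα (hX _ _)
  rw [show (fun p => ∫ t, F (p, t) ∂(Measure.map τ ℙ))
      = fun p : Fin n₁ × Fin n₂ => α - (X p.1 p.2) ^ 2 / α from funext step2]
  rw [integral_fintype (Integrable.of_finite)]
  have hmeasp : ∀ p : Fin n₁ × Fin n₂, (Measure.map IJ ℙ) {p} = ((n₁ * n₂ : ENNReal))⁻¹ := by
    intro p
    rw [Measure.map_apply hIJmeas (measurableSet_singleton p), hIJunif]
  simp only [measureReal_def, hmeasp]
  have htoReal : ((n₁ * n₂ : ENNReal))⁻¹.toReal = ((n₁ : ℝ) * (n₂ : ℝ))⁻¹ := by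
    rw [ENNReal.toReal_inv, ENNReal.toReal_mul]
    simp
  rw [htoReal]
  have hS : frobR X ^ 2 = ∑ i, ∑ j, X i j ^ 2 := Real.sq_sqrt (by positivity)
  rw [hS, Fintype.sum_prod_type]
  have hn₁' : (n₁ : ℝ) ≠ 0 := Nat.cast_ne_zero.mpr hn₁.ne'
  have hn₂' : (n₂ : ℝ) ≠ 0 := Nat.cast_ne_zero.mpr hn₂.ne'
  simp only [smul_eq_mul, mul_sub, Finset.sum_sub_distrib, Finset.sum_const,
    Finset.card_univ, Fintype.card_fin, nsmul_eq_mul, ← Finset.mul_sum, ← Finset.sum_div]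
  field_simp
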